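/- arXiv:1206.2564 — 2 statements merged into one kernel-verified Lean document; each statement's English description precedes it below -/
import Mathlib

section
/- Let G be a locally compact totally disconnected group and H a closed subgroup with G/H compact. If (π,V) is a smooth representation of G of finite type, then the restriction of π to H is a smooth representation of H of finite type. -/
open scoped TensorProduct

universe u v w

noncomputable section

/-- A representation is smooth if every vector has open stabilizer. -/
def IsSmoothRep {G : Type*} [Group G] [TopologicalSpace G] {V : Type*} [AddCommGroup V]
    [Module ℂ V] (ρ : Representation ℂ G V) : Prop :=
  ∀ v : V, IsOpen {g : G | ρ g v = v}

/-- Irreducible: nonzero, and no proper nontrivial invariant subspace. -/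
def IsIrreducibleRep {G : Type*} [Group G] {V : Type*} [AddCommGroup V] [Module ℂ V]
    (ρ : Representation ℂ G V) : Prop :=
  Nontrivial V ∧ ∀ p : Submodule ℂ V, (∀ (g : G) (v : V), v ∈ p → ρ g v ∈ p) → p = ⊥ ∨ p = ⊤

/-- The space of `G`-equivariant linear maps `Hom_G(ρ, π)`. -/
def repHom {G : Type*} [Group G] {V W : Type*} [AddCommGroup V] [Module ℂ V] [AddCommGroup W]
    [Module ℂ W] (ρ : Representation ℂ G V) (π : Representation ℂ G W) :
    Submodule ℂ (V →ₗ[ℂ] W) where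
  carrier := {f | ∀ (g : G) (v : V), f (ρ g v) = π g (f v)}
  add_mem' := by
    intro f₁ f₂ h₁ h₂ g v
    simp [h₁ g v, h₂ g v]
  zero_mem' := by intro g v; simp
  smul_mem' := by intro c f hf g v; simp [hf g v]

/-- Finite type: generated by finitely many vectors under the `G`-action. -/
def IsFiniteTypeRep {G : Type*} [Group G] {V : Type*} [AddCommGroup V] [Module ℂ V]
    (ρ : Representation ℂ G V) : Prop :=
  ∃ s : Finset V, Submodule.span ℂ {v | ∃ (g : G) (x : V), x ∈ s ∧ v = ρ g x} = ⊤

/-- Subspace of vectors fixed by a subgroup `K`. -/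
def fixedBy {G : Type*} [Group G] {W : Type*} [AddCommGroup W] [Module ℂ W]
    (π : Representation ℂ G W) (K : Subgroup G) : Submodule ℂ W where
  carrier := {w | ∀ k ∈ K, π k w = w}
  add_mem' := by intro a b ha hb k hk; simp [ha k hk, hb k hk]
  zero_mem' := by intro k hk; simp
  smul_mem' := by intro c a ha k hk; simp [ha k hk]

/-- Admissible: fixed vectors of every compact open subgroup form a finite-dimensional space. -/
def IsAdmissibleRep {G : Type*} [Group G] [TopologicalSpace G] {W : Type*} [AddCommGroup W]
    [Module ℂ W] (π : Representation ℂ G W) : Prop :=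
  ∀ K : Subgroup G, IsOpen (K : Set G) → IsCompact (K : Set G) →
    FiniteDimensional ℂ (fixedBy π K)

/-- if `H` is a closed subgroup of the l.c.t.d. group `G` with `G/H` compact and
`(π,V)` is a smooth representation of `G` of finite type, then `π|_H` is a smooth
representation of `H` of finite type. -/
theorem stmt_2 {G : Type u} [Group G] [TopologicalSpace G] [IsTopologicalGroup G]
    [LocallyCompactSpace G] [TotallyDisconnectedSpace G]
    (H : Subgroup G) (hHclosed : IsClosed (H : Set G)) (hcpt : CompactSpace (G ⧸ H))
    {V : Type v} [AddCommGroup V] [Module ℂ V] (π : Representation ℂ G V)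
    (hsmooth : IsSmoothRep π) (hft : IsFiniteTypeRep π) :
    IsSmoothRep (π.comp H.subtype) ∧ IsFiniteTypeRep (π.comp H.subtype) := by
  classical
  constructor
  · -- smoothness of restriction
    intro v
    have : {h : H | (π.comp H.subtype) h v = v} = Subtype.val ⁻¹' {g : G | π g v = v} := rfl
    rw [this]
    exact (hsmooth v).preimage continuous_subtype_val
  · obtain ⟨s, hs⟩ := hft
    -- K : the open subgroup fixing all generators
    set Kset : Set G := {g : G | ∀ x ∈ s, π g x = x} with hKset
    have hKopen : IsOpen Kset := by
      have : Kset = ⋂ x ∈ s, {g : G | π g x = x} := by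
        ext g; simp [hKset]
      rw [this]
      exact Set.Finite.isOpen_biInter s.finite_toSet fun x _ => hsmooth x
    have hKone : (1 : G) ∈ Kset := by intro x _; simp
    have hKinv : ∀ g ∈ Kset, g⁻¹ ∈ Kset := by
      intro g hg x hx
      have := hg x hx
      calc π g⁻¹ x = π g⁻¹ (π g x) := by rw [this]
        _ = x := by rw [← Module.End.mul_apply, ← map_mul]; simp
    -- cover G/H by images of K * a
    set U : G → Set (G ⧸ H) := fun a => QuotientGroup.mk '' ((fun k => k * a) '' Kset) with hU
    have hUopen : ∀ a : G, IsOpen (U a) := fun a =>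
      QuotientGroup.isOpenMap_coe _ ((Homeomorph.mulRight a).isOpenMap _ hKopen)
    have hUcov : (Set.univ : Set (G ⧸ H)) ⊆ ⋃ a : G, U a := by
      intro q _
      obtain ⟨a, rfl⟩ := QuotientGroup.mk_surjective q
      exact Set.mem_iUnion.2 ⟨a, ⟨a, ⟨1, hKone, one_mul a⟩, rfl⟩⟩
    obtain ⟨t, ht⟩ := isCompact_univ.elim_finite_subcover U hUopen hUcov
    -- new finite generating set for H
    refine ⟨(t ×ˢ s).image fun p => π p.1⁻¹ p.2, ?_⟩
    rw [eq_top_iff, ← hs, Submodule.span_le]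
    rintro v ⟨g, x, hx, rfl⟩
    -- find a ∈ t, k ∈ Kset with g⁻¹ = k * a mod H
    have : QuotientGroup.mk g⁻¹ ∈ ⋃ a ∈ t, U a := ht (Set.mem_univ _)
    obtain ⟨a, ha, k, hk, hka⟩ : ∃ a ∈ t, ∃ k ∈ Kset, QuotientGroup.mk (k * a) =
        (QuotientGroup.mk g⁻¹ : G ⧸ H) := by
      simp only [Set.mem_iUnion, hU, Set.mem_image] at this
      obtain ⟨a, ha, _, ⟨k, hk, rfl⟩, hq⟩ := this
      exact ⟨a, ha, k, hk, hq⟩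
    have hH : g * k * a ∈ H := by
      rw [QuotientGroup.eq] at hka
      have : (k * a)⁻¹ * g⁻¹ ∈ H := hka
      have := H.inv_mem this
      simpa [mul_assoc] using this
    set h' : H := ⟨g * k * a, hH⟩ with hh'
    have key : π g x = (π.comp H.subtype) h' (π a⁻¹ x) := by
      have hgx : g = (g * k * a) * a⁻¹ * k⁻¹ := by group
      have hkx : π k⁻¹ x = x := hKinv k hk x hx
      calc π g x = π ((g * k * a) * a⁻¹ * k⁻¹) x := by rw [← hgx]
        _ = π (g * k * a) (π a⁻¹ (π k⁻¹ x)) := by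
            simp only [map_mul, Module.End.mul_apply]
        _ = (π.comp H.subtype) h' (π a⁻¹ x) := by rw [hkx]; rfl
    rw [key]
    apply Submodule.subset_span
    exact ⟨h', π a⁻¹ x, Finset.mem_image.2 ⟨(a, x), Finset.mem_product.2 ⟨ha, hx⟩, rfl⟩, rfl⟩
end
end

section
/- Let G_1 be a locally compact totally disconnected group, (π_1,V_1) an admissible irreducible smooth representation of G_1, G_2 another l.c.t.d. group, and (π_2,V_2) a smooth representation of G_2. If V is a (G_1 × G_2)-invariant subspace of V_1 ⊗ V_2 (with the external tensor product action), then there exists a G_2-invariant subspace V_2' of V_2 with V = V_1 ⊗ V_2'. -/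
open scoped TensorProduct

universe u v w

noncomputable section

/-- External tensor product of representations of two groups. -/
def extTensor {G₁ G₂ : Type*} [Group G₁] [Group G₂] {V₁ V₂ : Type*}
    [AddCommGroup V₁] [Module ℂ V₁] [AddCommGroup V₂] [Module ℂ V₂]
    (π₁ : Representation ℂ G₁ V₁) (π₂ : Representation ℂ G₂ V₂) :
    Representation ℂ (G₁ × G₂) (V₁ ⊗[ℂ] V₂) :=
  Representation.tprod (π₁.comp (MonoidHom.fst G₁ G₂)) (π₂.comp (MonoidHom.snd G₁ G₂))


open scoped Pointwise
open Set Filter Topology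

theorem myVanDantzig {G : Type*} [Group G] [TopologicalSpace G] [IsTopologicalGroup G]
    [LocallyCompactSpace G] [TotallyDisconnectedSpace G] :
    ∃ K : Subgroup G, IsOpen (K : Set G) ∧ IsCompact (K : Set G) := by
  obtain ⟨K₀, hK₀c, hK₀n⟩ := exists_compact_mem_nhds (1 : G)
  obtain ⟨W, hWclopen, einW, hWsub⟩ :=
    (loc_compact_Haus_tot_disc_of_zero_dim (H := G)).mem_nhds_iff.mp
      (interior_mem_nhds.mpr hK₀n)
  have hWcpt : IsCompact W := hK₀c.of_isClosed_subset hWclopen.1 (hWsub.trans interior_subset)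
  have hTex : ∃ T ∈ 𝓝 (1 : G), W * T ⊆ W := by
    apply hWcpt.induction_on (p := fun S ↦ ∃ T ∈ 𝓝 (1 : G), S * T ⊆ W)
      ⟨Set.univ, by simp only [univ_mem, empty_mul, empty_subset, and_self]⟩
      (fun _ _ huv ⟨T, hT, mem⟩ ↦ ⟨T, hT, (mul_subset_mul_right huv).trans mem⟩)
      fun U V ⟨T₁, hT₁, mem1⟩ ⟨T₂, hT₂, mem2⟩ ↦ ⟨T₁ ∩ T₂, inter_mem hT₁ hT₂, by
        rw [union_mul]
        exact union_subset (mul_subset_mul_left inter_subset_left |>.trans mem1)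
          (mul_subset_mul_left inter_subset_right |>.trans mem2)⟩
    intro x memW
    have : (x, 1) ∈ (fun p : G × G ↦ p.1 * p.2) ⁻¹' W := by simp [memW]
    rcases isOpen_prod_iff.mp (continuous_mul.isOpen_preimage W <| hWclopen.2) x 1 this with
      ⟨U, V, Uopen, Vopen, xmemU, onememV, prodsub⟩
    have h6 : U * V ⊆ W := mul_subset_iff.mpr (fun _ hx _ hy ↦ prodsub (mk_mem_prod hx hy))
    exact ⟨U ∩ W, ⟨U, Uopen.mem_nhds xmemU, W, fun _ a ↦ a, rfl⟩,
      V, IsOpen.mem_nhds Vopen onememV, fun _ a ↦ h6 ((mul_subset_mul_right inter_subset_left) a)⟩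
  obtain ⟨S, Smemnhds, mulclose⟩ := hTex
  rcases mem_nhds_iff.mp Smemnhds with ⟨U, UsubS, Uopen, onememU⟩
  set V : Set G := U ∩ U⁻¹ with hVdef
  have hVnhd : V ∈ 𝓝 (1 : G) := by
    refine inter_mem (Uopen.mem_nhds onememU) ?_
    exact (Uopen.inv).mem_nhds (by simpa using onememU)
  have hVinv : V⁻¹ = V := by simp [hVdef, inter_comm]
  have hVopen : IsOpen V := Uopen.inter Uopen.inv
  have hVmul : W * V ⊆ W := fun a ha ↦
    mulclose (mul_subset_mul_left UsubS (mul_subset_mul_left inter_subset_left ha))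
  let K : Subgroup G := {
    carrier := ⋃ n, V ^ (n + 1)
    mul_mem' := fun ha hb ↦ by
      rcases mem_iUnion.mp ha with ⟨k, hk⟩
      rcases mem_iUnion.mp hb with ⟨l, hl⟩
      apply mem_iUnion.mpr
      exact ⟨k + 1 + l, by rw [add_assoc, pow_add]; exact Set.mul_mem_mul hk hl⟩
    one_mem' := mem_iUnion.mpr ⟨0, by simp [mem_of_mem_nhds hVnhd]⟩
    inv_mem' := fun ha ↦ by
      rcases mem_iUnion.mp ha with ⟨k, hk⟩
      apply mem_iUnion.mpr
      refine ⟨k, ?_⟩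
      rw [← hVinv]
      simpa only [inv_pow, Set.mem_inv, inv_inv] using hk }
  have hKopen : IsOpen (K : Set G) := by
    refine isOpen_iUnion (fun n ↦ ?_)
    rw [pow_succ]
    exact hVopen.mul_left
  have mulVpow : ∀ n : ℕ, W * V ^ (n + 1) ⊆ W := by
    intro n
    induction' n with n ih
    · simpa using hVmul
    · rw [pow_succ, ← mul_assoc]
      exact (Set.mul_subset_mul_right ih).trans hVmul
  have hKW : (K : Set G) ⊆ W := by
    refine iUnion_subset fun n x xin ↦ ?_
    refine mulVpow n ?_
    rw [Set.mem_mul]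
    exact ⟨1, einW, x, xin, one_mul x⟩
  exact ⟨K, hKopen, hWcpt.of_isClosed_subset (Subgroup.isClosed_of_isOpen K hKopen) hKW⟩



section Hecke

variable {G₁ : Type v} [Group G₁] {V₁ : Type u} [AddCommGroup V₁] [Module ℂ V₁]

/-- The span of the operators `π₁ g`. -/
noncomputable def hecke (π₁ : Representation ℂ G₁ V₁) : Submodule ℂ (V₁ →ₗ[ℂ] V₁) :=
  Submodule.span ℂ (Set.range fun g => (π₁ g : V₁ →ₗ[ℂ] V₁))

lemma one_mem_hecke (π₁ : Representation ℂ G₁ V₁) : (1 : V₁ →ₗ[ℂ] V₁) ∈ hecke π₁ := by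
  have h := Submodule.subset_span (R := ℂ) (Set.mem_range_self (f := fun g => (π₁ g : V₁ →ₗ[ℂ] V₁)) 1)
  simpa [hecke] using h

lemma comp_mem_hecke (π₁ : Representation ℂ G₁ V₁) (g : G₁) {f : V₁ →ₗ[ℂ] V₁}
    (hf : f ∈ hecke π₁) : (π₁ g : V₁ →ₗ[ℂ] V₁) * f ∈ hecke π₁ := by
  have hmap : (hecke π₁).map (LinearMap.mulLeft ℂ (π₁ g : V₁ →ₗ[ℂ] V₁)) ≤ hecke π₁ := by
    rw [hecke, Submodule.map_span]
    apply Submodule.span_le.mpr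
    rintro _ ⟨_, ⟨g', rfl⟩, rfl⟩
    refine Submodule.subset_span ⟨g * g', ?_⟩
    simp [LinearMap.mulLeft_apply, map_mul]
  exact hmap ⟨f, hf, rfl⟩

lemma hecke_cyclic (π₁ : Representation ℂ G₁ V₁) (hirr : IsIrreducibleRep π₁)
    {v : V₁} (hv : v ≠ 0) (w : V₁) : ∃ f ∈ hecke π₁, f v = w := by
  let M : Submodule ℂ V₁ := (hecke π₁).map (LinearMap.applyₗ v)
  have hMmem : ∀ x, x ∈ M ↔ ∃ f ∈ hecke π₁, f v = x := by
    intro x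
    simp [M, Submodule.mem_map, LinearMap.applyₗ]
    exact Iff.rfl
  have hMinv : ∀ (g : G₁) (x : V₁), x ∈ M → π₁ g x ∈ M := by
    intro g x hx
    rcases (hMmem x).mp hx with ⟨f, hf, rfl⟩
    exact (hMmem _).mpr ⟨(π₁ g : V₁ →ₗ[ℂ] V₁) * f, comp_mem_hecke π₁ g hf, rfl⟩
  have hvM : v ∈ M := (hMmem v).mpr ⟨1, one_mem_hecke π₁, rfl⟩
  rcases hirr.2 M hMinv with hM | hM
  · exact absurd (hM ▸ hvM) (by simpa using hv)
  · exact (hMmem w).mp (hM ▸ Submodule.mem_top)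

end Hecke
section Schur

variable {G₁ : Type v} [Group G₁] [TopologicalSpace G₁] [IsTopologicalGroup G₁]
    [LocallyCompactSpace G₁] [TotallyDisconnectedSpace G₁]
    {V₁ : Type u} [AddCommGroup V₁] [Module ℂ V₁]

lemma schur (π₁ : Representation ℂ G₁ V₁) (hsm : IsSmoothRep π₁)
    (hirr : IsIrreducibleRep π₁) (hadm : IsAdmissibleRep π₁)
    (f : V₁ →ₗ[ℂ] V₁) (hf : ∀ (g : G₁) (w : V₁), f (π₁ g w) = π₁ g (f w)) :
    ∃ c : ℂ, ∀ w, f w = c • w := by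
  haveI := hirr.1
  obtain ⟨v₀, hv₀⟩ := exists_ne (0 : V₁)
  obtain ⟨K₀, hK₀open, hK₀cpt⟩ := myVanDantzig (G := G₁)
  let St : Subgroup G₁ :=
    { carrier := {g | π₁ g v₀ = v₀}
      one_mem' := by simp
      mul_mem' := by
        intro a b ha hb
        simp only [Set.mem_setOf_eq] at ha hb ⊢
        rw [map_mul]
        simp [Module.End.mul_apply, hb, ha]
      inv_mem' := by
        intro a ha
        simp only [Set.mem_setOf_eq] at ha ⊢
        have : π₁ a⁻¹ (π₁ a v₀) = π₁ a⁻¹ v₀ := by rw [ha]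
        rwa [← Module.End.mul_apply, ← map_mul, inv_mul_cancel, map_one, Module.End.one_apply,
          eq_comm] at this }
  let K : Subgroup G₁ := K₀ ⊓ St
  have hKopen : IsOpen (K : Set G₁) := hK₀open.inter (hsm v₀)
  have hKcpt : IsCompact (K : Set G₁) := by
    refine hK₀cpt.of_isClosed_subset (Subgroup.isClosed_of_isOpen K hKopen) ?_
    intro x hx; exact hx.1
  haveI : FiniteDimensional ℂ (fixedBy π₁ K) := hadm K hKopen hKcpt
  have hmaps : ∀ x ∈ fixedBy π₁ K, f x ∈ fixedBy π₁ K := by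
    intro x hx k hk
    rw [← hf k x, hx k hk]
  haveI : Nontrivial (fixedBy π₁ K) := by
    refine nontrivial_of_ne ⟨v₀, ?_⟩ 0 ?_
    · intro k hk; exact hk.2
    · intro h; exact hv₀ (congrArg Subtype.val h)
  let fres : fixedBy π₁ K →ₗ[ℂ] fixedBy π₁ K := f.restrict hmaps
  obtain ⟨c, hc⟩ := Module.End.exists_eigenvalue fres
  obtain ⟨x, hx⟩ := hc.exists_hasEigenvector
  have hxval : f (x : V₁) = c • (x : V₁) := by
    have := hx.apply_eq_smul
    exact congrArg Subtype.val this
  have hxne : (x : V₁) ≠ 0 := fun h => hx.2 (by exact_mod_cast h)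
  let N : Submodule ℂ V₁ := LinearMap.ker (f - c • (1 : V₁ →ₗ[ℂ] V₁))
  have hNinv : ∀ (g : G₁) (y : V₁), y ∈ N → π₁ g y ∈ N := by
    intro g y hy
    have hy' : f y = c • y := by
      have := LinearMap.mem_ker.mp hy
      simpa [sub_eq_zero, LinearMap.sub_apply] using this
    refine LinearMap.mem_ker.mpr ?_
    simp [LinearMap.sub_apply, hf g y, hy', map_smul, sub_eq_zero]
  have hxN : (x : V₁) ∈ N := by
    refine LinearMap.mem_ker.mpr ?_
    simp [LinearMap.sub_apply, hxval, sub_eq_zero]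
  rcases hirr.2 N hNinv with hN | hN
  · exact absurd (hN ▸ hxN) (by simpa using hxne)
  · refine ⟨c, fun w => ?_⟩
    have hw : w ∈ N := hN ▸ Submodule.mem_top
    have := LinearMap.mem_ker.mp hw
    simpa [sub_eq_zero, LinearMap.sub_apply] using this

end Schur
section Density

variable {G₁ : Type v} [Group G₁] [TopologicalSpace G₁] [IsTopologicalGroup G₁]
    [LocallyCompactSpace G₁] [TotallyDisconnectedSpace G₁]
    {V₁ : Type u} [AddCommGroup V₁] [Module ℂ V₁]

lemma density_fin (π₁ : Representation ℂ G₁ V₁) (hsm : IsSmoothRep π₁)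
    (hirr : IsIrreducibleRep π₁) (hadm : IsAdmissibleRep π₁) :
    ∀ (n : ℕ) (v : Fin n → V₁), LinearIndependent ℂ v → ∀ u : Fin n → V₁,
      ∃ f ∈ hecke π₁, ∀ i, f (v i) = u i := by
  intro n
  induction n with
  | zero => exact fun v _ u => ⟨0, Submodule.zero_mem _, fun i => i.elim0⟩
  | succ n ih =>
    intro v hv u
    have hv' : LinearIndependent ℂ (fun i : Fin n => v i.castSucc) :=
      hv.comp _ (Fin.castSucc_injective n)
    set vl := v (Fin.last n) with hvl
    let S' : Submodule ℂ (V₁ →ₗ[ℂ] V₁) :=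
      hecke π₁ ⊓ ⨅ i : Fin n, LinearMap.ker (LinearMap.applyₗ (v i.castSucc))
    have hS'mem : ∀ f : V₁ →ₗ[ℂ] V₁,
        f ∈ S' ↔ f ∈ hecke π₁ ∧ ∀ i : Fin n, f (v i.castSucc) = 0 := by
      intro f
      simp [S', Submodule.mem_inf, Submodule.mem_iInf, LinearMap.mem_ker, LinearMap.applyₗ]
      exact fun _ => Iff.rfl
    let N : Submodule ℂ V₁ := S'.map (LinearMap.applyₗ vl)
    have hNmem : ∀ x : V₁, x ∈ N ↔ ∃ f ∈ S', f vl = x := by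
      intro x; simp [N, Submodule.mem_map, LinearMap.applyₗ]
      exact Iff.rfl
    have hNinv : ∀ (g : G₁) (x : V₁), x ∈ N → π₁ g x ∈ N := by
      intro g x hx
      rcases (hNmem x).mp hx with ⟨f, hf, rfl⟩
      rcases (hS'mem f).mp hf with ⟨hf1, hf2⟩
      refine (hNmem _).mpr ⟨(π₁ g : V₁ →ₗ[ℂ] V₁) * f,
        (hS'mem _).mpr ⟨comp_mem_hecke π₁ g hf1, ?_⟩, rfl⟩
      intro i; simp [Module.End.mul_apply, hf2 i]
    rcases hirr.2 N hNinv with hN | hN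
    · exfalso
      have uniq : ∀ f ∈ hecke π₁, (∀ i : Fin n, f (v i.castSucc) = 0) → f vl = 0 := by
        intro f hf h0
        have : f vl ∈ N := (hNmem _).mpr ⟨f, (hS'mem f).mpr ⟨hf, h0⟩, rfl⟩
        rw [hN] at this
        simpa using this
      have uniq2 : ∀ f g : V₁ →ₗ[ℂ] V₁, f ∈ hecke π₁ → g ∈ hecke π₁ →
          (∀ j : Fin n, f (v j.castSucc) = g (v j.castSucc)) → f vl = g vl := by
        intro f g hfm hgm hagree
        have := uniq (f - g) (Submodule.sub_mem _ hfm hgm)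
          (fun j => by simp [LinearMap.sub_apply, hagree j])
        rw [LinearMap.sub_apply, sub_eq_zero] at this
        exact this
      have hexF : ∀ (i : Fin n) (w : V₁), ∃ f, f ∈ hecke π₁ ∧
          ∀ j : Fin n, f (v j.castSucc) = if j = i then w else 0 := by
        intro i w
        rcases ih _ hv' (fun j => if j = i then w else 0) with ⟨f, hf, hfa⟩
        exact ⟨f, hf, hfa⟩
      choose F hFmem hFval using hexF
      have key : ∀ i : Fin n, ∃ c : ℂ, ∀ w, (F i w) vl = c • w := by
        intro i
        have hadd : ∀ w w', (F i (w + w')) vl = (F i w) vl + (F i w') vl := by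
          intro w w'
          have := uniq2 (F i (w + w')) (F i w + F i w') (hFmem _ _)
            (Submodule.add_mem _ (hFmem _ _) (hFmem _ _))
            (fun j => by
              simp only [LinearMap.add_apply, hFval]
              split <;> simp)
          simpa [LinearMap.add_apply] using this
        have hsmul : ∀ (a : ℂ) (w : V₁), (F i (a • w)) vl = a • ((F i w) vl) := by
          intro a w
          have := uniq2 (F i (a • w)) (a • F i w) (hFmem _ _)
            (Submodule.smul_mem _ a (hFmem _ _))
            (fun j => by
              simp only [LinearMap.smul_apply, hFval]
              split <;> simp)
          simpa [LinearMap.smul_apply] using this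
        let T : V₁ →ₗ[ℂ] V₁ :=
          { toFun := fun w => (F i w) vl
            map_add' := hadd
            map_smul' := hsmul }
        have hTequiv : ∀ (g : G₁) (w : V₁), T (π₁ g w) = π₁ g (T w) := by
          intro g w
          have := uniq2 (F i (π₁ g w)) ((π₁ g : V₁ →ₗ[ℂ] V₁) * F i w) (hFmem _ _)
            (comp_mem_hecke π₁ g (hFmem _ _))
            (fun j => by
              simp only [Module.End.mul_apply, hFval]
              split <;> simp)
          exact this
        rcases schur π₁ hsm hirr hadm T hTequiv with ⟨c, hc⟩
        exact ⟨c, fun w => hc w⟩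
      choose c hc using key
      have hvlsum : vl = ∑ i : Fin n, c i • v i.castSucc := by
        have h0 : ∀ j : Fin n,
            ((1 : V₁ →ₗ[ℂ] V₁) - ∑ i : Fin n, F i (v i.castSucc)) (v j.castSucc) = 0 := by
          intro j
          simp only [LinearMap.sub_apply, LinearMap.sum_apply, Module.End.one_apply, hFval]
          rw [Finset.sum_ite_eq Finset.univ j (fun i => v i.castSucc)]
          simp
        have hm : ((1 : V₁ →ₗ[ℂ] V₁) - ∑ i : Fin n, F i (v i.castSucc)) ∈ hecke π₁ :=
          Submodule.sub_mem _ (one_mem_hecke π₁)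
            (Submodule.sum_mem _ fun i _ => hFmem _ _)
        have h1 := uniq _ hm h0
        rw [LinearMap.sub_apply, sub_eq_zero, Module.End.one_apply, LinearMap.sum_apply] at h1
        calc vl = ∑ i : Fin n, (F i (v i.castSucc)) vl := h1
        _ = ∑ i : Fin n, c i • v i.castSucc := Finset.sum_congr rfl fun i _ => hc i _
      have hsum0 : ∑ j : Fin (n + 1), (Fin.lastCases (motive := fun _ => ℂ) (-1 : ℂ) c) j • v j = 0 := by
        rw [Fin.sum_univ_castSucc]
        simp only [Fin.lastCases_castSucc, Fin.lastCases_last]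
        rw [← hvl, ← hvlsum]
        simp
      have hcoef := Fintype.linearIndependent_iff.mp hv _ hsum0 (Fin.last n)
      simp at hcoef
    · rcases ih _ hv' (fun i => u i.castSucc) with ⟨f₀, hf₀, hf₀v⟩
      have hmem : u (Fin.last n) - f₀ vl ∈ N := hN ▸ Submodule.mem_top
      rcases (hNmem _).mp hmem with ⟨f₁, hf₁S, hf₁v⟩
      rcases (hS'mem f₁).mp hf₁S with ⟨hf₁, hker⟩
      refine ⟨f₀ + f₁, Submodule.add_mem _ hf₀ hf₁, ?_⟩
      intro i
      induction i using Fin.lastCases with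
      | last =>
        rw [LinearMap.add_apply, ← hvl, hf₁v]
        abel
      | cast j =>
        rw [LinearMap.add_apply, hf₀v j, hker j, add_zero]

lemma density (π₁ : Representation ℂ G₁ V₁) (hsm : IsSmoothRep π₁)
    (hirr : IsIrreducibleRep π₁) (hadm : IsAdmissibleRep π₁)
    {ι : Type*} [Fintype ι] (v : ι → V₁) (hv : LinearIndependent ℂ v) (u : ι → V₁) :
    ∃ f ∈ hecke π₁, ∀ i, f (v i) = u i := by
  let e := Fintype.equivFin ι
  obtain ⟨f, hf, hfv⟩ := density_fin π₁ hsm hirr hadm (Fintype.card ι)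
    (v ∘ e.symm) (hv.comp e.symm e.symm.injective) (u ∘ e.symm)
  refine ⟨f, hf, fun i => ?_⟩
  have := hfv (e i)
  simpa using this

end Density
/-- if `π₁` is an admissible irreducible smooth representation of `G₁` and
`π₂` a smooth representation of `G₂`, then every `(G₁ × G₂)`-invariant subspace of
`V₁ ⊗ V₂` is of the form `V₁ ⊗ V₂'` for some `G₂`-invariant subspace `V₂'` of `V₂`. -/
theorem stmt_6 {G₁ : Type v} [Group G₁] [TopologicalSpace G₁] [IsTopologicalGroup G₁]
    [LocallyCompactSpace G₁] [TotallyDisconnectedSpace G₁]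
    {G₂ : Type w} [Group G₂] [TopologicalSpace G₂] [IsTopologicalGroup G₂]
    [LocallyCompactSpace G₂] [TotallyDisconnectedSpace G₂]
    {V₁ : Type u} [AddCommGroup V₁] [Module ℂ V₁] (π₁ : Representation ℂ G₁ V₁)
    (h₁sm : IsSmoothRep π₁) (h₁irr : IsIrreducibleRep π₁) (h₁adm : IsAdmissibleRep π₁)
    {V₂ : Type u} [AddCommGroup V₂] [Module ℂ V₂] (π₂ : Representation ℂ G₂ V₂)
    (h₂sm : IsSmoothRep π₂)
    (p : Submodule ℂ (V₁ ⊗[ℂ] V₂))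
    (hpinv : ∀ (g : G₁ × G₂) (x : V₁ ⊗[ℂ] V₂), x ∈ p → extTensor π₁ π₂ g x ∈ p) :
    ∃ p₂ : Submodule ℂ V₂, (∀ (g : G₂) (v : V₂), v ∈ p₂ → π₂ g v ∈ p₂) ∧
      p = LinearMap.range (TensorProduct.map (LinearMap.id : V₁ →ₗ[ℂ] V₁) p₂.subtype) := by
  classical
  let p₂ : Submodule ℂ V₂ :=
    { carrier := {w | ∀ v : V₁, v ⊗ₜ[ℂ] w ∈ p}
      add_mem' := fun hw hw' v => by
        rw [TensorProduct.tmul_add]; exact Submodule.add_mem p (hw v) (hw' v)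
      zero_mem' := fun v => by rw [TensorProduct.tmul_zero]; exact Submodule.zero_mem p
      smul_mem' := fun a w hw v => by
        rw [TensorProduct.tmul_smul]; exact Submodule.smul_mem p a (hw v) }
  have hp₂mem : ∀ w : V₂, w ∈ p₂ ↔ ∀ v : V₁, v ⊗ₜ[ℂ] w ∈ p := fun w => Iff.rfl
  have hext : ∀ (g₁ : G₁) (g₂ : G₂) (v : V₁) (w : V₂),
      extTensor π₁ π₂ (g₁, g₂) (v ⊗ₜ[ℂ] w) = (π₁ g₁ v) ⊗ₜ[ℂ] (π₂ g₂ w) := by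
    intro g₁ g₂ v w
    simp [extTensor, Representation.tprod_apply, TensorProduct.map_tmul]
  refine ⟨p₂, ?_, ?_⟩
  · intro g w hw v
    have h := hpinv (1, g) (v ⊗ₜ[ℂ] w) (hw v)
    rw [hext] at h
    simpa using h
  · apply le_antisymm
    · -- p ≤ range
      intro x hx
      let b := Module.Basis.ofVectorSpace ℂ V₁
      let ι := Module.Basis.ofVectorSpaceIndex ℂ V₁
      let E : V₁ ⊗[ℂ] V₂ ≃ₗ[ℂ] (ι →₀ V₂) :=
        (TensorProduct.congr b.repr (LinearEquiv.refl ℂ V₂)).trans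
          (TensorProduct.finsuppScalarLeft ℂ V₂ ι)
      have hEsymm : ∀ (i : ι) (z : V₂), E.symm (Finsupp.single i z) = (b i) ⊗ₜ[ℂ] z := by
        intro i z
        rw [LinearEquiv.symm_trans_apply, TensorProduct.finsuppScalarLeft_symm_apply_single,
          TensorProduct.congr_symm_tmul, Module.Basis.repr_symm_single_one]
        rfl
      set w : ι →₀ V₂ := E x with hw
      have h2 : E.symm (w.sum Finsupp.single) = ∑ i ∈ w.support, (b i) ⊗ₜ[ℂ] (w i) := by
        rw [Finsupp.sum, map_sum]
        exact Finset.sum_congr rfl fun i _ => hEsymm i (w i)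
      have hxe : x = ∑ i ∈ w.support, (b i) ⊗ₜ[ℂ] (w i) := by
        rw [← h2, Finsupp.sum_single, hw]
        exact (E.symm_apply_apply x).symm
      have hrT : ∀ f ∈ hecke π₁, (LinearMap.rTensor V₂ f) x ∈ p := by
        intro f hf
        let Good : Submodule ℂ (V₁ →ₗ[ℂ] V₁) :=
          { carrier := {f | (LinearMap.rTensor V₂ f) x ∈ p}
            add_mem' := fun {f g} ha hb => by
              simp only [Set.mem_setOf_eq, LinearMap.rTensor_add, LinearMap.add_apply]
              exact Submodule.add_mem p ha hb
            zero_mem' := by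
              simp only [Set.mem_setOf_eq, LinearMap.rTensor_zero, LinearMap.zero_apply]
              exact Submodule.zero_mem p
            smul_mem' := fun a f ha => by
              simp only [Set.mem_setOf_eq, LinearMap.rTensor_smul, LinearMap.smul_apply]
              exact Submodule.smul_mem p a ha }
        have hgen : (Set.range fun g => (π₁ g : V₁ →ₗ[ℂ] V₁)) ⊆ (Good : Set (V₁ →ₗ[ℂ] V₁)) := by
          rintro _ ⟨g, rfl⟩
          have heq : LinearMap.rTensor V₂ (π₁ g : V₁ →ₗ[ℂ] V₁) = extTensor π₁ π₂ (g, 1) := by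
            show TensorProduct.map (π₁ g) LinearMap.id = TensorProduct.map (π₁ g) (π₂ 1)
            rw [map_one]
            rfl
          show (LinearMap.rTensor V₂ (π₁ g : V₁ →ₗ[ℂ] V₁)) x ∈ p
          rw [heq]
          exact hpinv (g, 1) x hx
        exact Submodule.span_le.mpr hgen hf
      have hwmem : ∀ i : ι, w i ∈ p₂ := by
        intro i
        by_cases hi : i ∈ w.support
        · rw [hp₂mem]
          intro vv
          obtain ⟨f, hf, hfv⟩ := density π₁ h₁sm h₁irr h₁adm
            (ι := ↥w.support) (fun j => b (j : ι))
            ((b.linearIndependent).comp _ Subtype.val_injective)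
            (fun j => if (j : ι) = i then vv else 0)
          have h1 : (LinearMap.rTensor V₂ f) x ∈ p := hrT f hf
          rw [hxe, map_sum] at h1
          have h3 : ∑ j ∈ w.support, (LinearMap.rTensor V₂ f) ((b j) ⊗ₜ[ℂ] (w j))
              = vv ⊗ₜ[ℂ] w i := by
            rw [Finset.sum_congr rfl (fun j hj => ?_), Finset.sum_ite_eq' w.support i
              (fun j => vv ⊗ₜ[ℂ] w j), if_pos hi]
            rw [LinearMap.rTensor_tmul]
            have := hfv ⟨j, hj⟩
            simp only at this
            rw [this, TensorProduct.ite_tmul]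
          rw [h3] at h1
          exact h1
        · have hz : w i = 0 := Finsupp.notMem_support_iff.mp hi
          rw [hz]
          exact Submodule.zero_mem p₂
      rw [hxe]
      apply Submodule.sum_mem
      intro i _
      exact ⟨(b i) ⊗ₜ[ℂ] (⟨w i, hwmem i⟩ : p₂), by
        rw [TensorProduct.map_tmul]; rfl⟩
    · rintro _ ⟨t, rfl⟩
      induction t using TensorProduct.induction_on with
      | zero => simpa using Submodule.zero_mem p
      | tmul v z => simpa [TensorProduct.map_tmul] using ((hp₂mem z.1).mp z.2) v
      | add a c ha hc => rw [map_add]; exact Submodule.add_mem p ha hc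
end
end
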